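/- Let Λ be a left cancellative small category, let M be a conical atomic monoid, let d : Λ → M be a length function satisfying (LF1) and (LF2), let B be a transversal of generators of the maximal proper principal right ideals of Λ, and suppose Λ satisfies the R-condition. Then every morphism of Λ has a unique representation as an element of B*Λ⁻¹: for every α ∈ Λ there exist β ∈ B* and g ∈ Λ⁻¹ with α = βg, and if β₁g₁ = β₂g₂ with β₁, β₂ ∈ B* and g₁, g₂ ∈ Λ⁻¹, then β₁ = β₂ and g₁ = g₂. -/

import Mathlib

/-- A left cancellative small category (LCSC), presented as a set of morphisms
with source and range maps and a (total, but only meaningful on composable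
pairs) composition. Identities are the morphisms of the form `src a` / `ran a`. -/
structure LCSC where
  Mor : Type
  src : Mor → Mor
  ran : Mor → Mor
  comp : Mor → Mor → Mor
  src_src : ∀ a, src (src a) = src a
  ran_src : ∀ a, ran (src a) = src a
  src_ran : ∀ a, src (ran a) = ran a
  ran_ran : ∀ a, ran (ran a) = ran a
  comp_src : ∀ a, comp a (src a) = a
  id_comp : ∀ a, comp (ran a) a = a
  src_comp : ∀ a b, src a = ran b → src (comp a b) = src b
  ran_comp : ∀ a b, src a = ran b → ran (comp a b) = ran a
  assoc : ∀ a b c, src a = ran b → src b = ran c →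
      comp (comp a b) c = comp a (comp b c)
  leftCancel : ∀ a b c, src a = ran b → src a = ran c →
      comp a b = comp a c → b = c

namespace LCSC

variable (C : LCSC)

/-- `v` is an identity morphism (an object of `Λ⁰`). -/
def IsId (v : C.Mor) : Prop := C.src v = v ∧ C.ran v = v

/-- `a ∈ Λ⁻¹`, i.e. `a` is invertible. -/
def IsInvertible (a : C.Mor) : Prop :=
  ∃ b, C.src a = C.ran b ∧ C.src b = C.ran a ∧
    C.comp a b = C.ran a ∧ C.comp b a = C.src a

/-- The principal right ideal `aΛ`. -/
def Ideal (a : C.Mor) : Set C.Mor :=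
  {x | ∃ c, C.src a = C.ran c ∧ x = C.comp a c}

/-- `a ≤ b` iff `b ∈ aΛ`, i.e. `a` is an initial segment of `b`. -/
def le (a b : C.Mor) : Prop := b ∈ C.Ideal a

end LCSC
/-- `d : Λ → M` is a length function into the monoid `M`. -/
def LCSC.MLenFn (C : LCSC) {M : Type} [Monoid M] (d : C.Mor → M) : Prop :=
  ∀ a b, C.src a = C.ran b → d (C.comp a b) = d a * d b

/-- (LF1): `d⁻¹(1) = Λ⁻¹`. -/
def LCSC.LF1 (C : LCSC) {M : Type} [Monoid M] (d : C.Mor → M) : Prop :=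
  ∀ a, d a = 1 ↔ C.IsInvertible a

/-- (LF2): every factorization of `d(α)` in `M` lifts to a factorization of `α`. -/
def LCSC.LF2 (C : LCSC) {M : Type} [Monoid M] (d : C.Mor → M) : Prop :=
  ∀ a m₁ m₂, d a = m₁ * m₂ →
    ∃ a₁ a₂, C.src a₁ = C.ran a₂ ∧ a = C.comp a₁ a₂ ∧ d a₁ = m₁ ∧ d a₂ = m₂

/-- The monoid `M` is conical: `m₁m₂ = 1` implies `m₁ = m₂ = 1`. -/
def Conical (M : Type) [Monoid M] : Prop :=
  ∀ m₁ m₂ : M, m₁ * m₂ = 1 → m₁ = 1 ∧ m₂ = 1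

/-- `e ∈ M` is an atom: `e = m₁m₂` implies `m₁ = 1` or `m₂ = 1`. -/
def MAtom {M : Type} [Monoid M] (e : M) : Prop :=
  ∀ m₁ m₂ : M, e = m₁ * m₂ → m₁ = 1 ∨ m₂ = 1

/-- `M` is atomic: it is generated by its atoms. -/
def AtomicMonoid (M : Type) [Monoid M] : Prop :=
  ∀ m : M, m ∈ Submonoid.closure {e : M | MAtom e}

/-- `α ∈ Λ` is an atom: whenever `α = βγ`, then `β ∈ Λ⁻¹` or `γ ∈ Λ⁻¹`. -/
def LCSC.CAtom (C : LCSC) (a : C.Mor) : Prop :=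
  ∀ b c, C.src b = C.ran c → a = C.comp b c →
    C.IsInvertible b ∨ C.IsInvertible c

/-- `αΛ` is a maximal proper principal right ideal: it is properly contained in
`r(α)Λ` and maximal among principal right ideals properly contained in `r(α)Λ`. -/
def LCSC.MaxIdeal (C : LCSC) (a : C.Mor) : Prop :=
  C.Ideal a ⊂ C.Ideal (C.ran a) ∧
  ∀ b : C.Mor, C.Ideal a ⊆ C.Ideal b → C.Ideal b ⊂ C.Ideal (C.ran a) →
    C.Ideal b = C.Ideal a

/-- The subcategory `B*` of `Λ` generated by a set `B` of morphisms, together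
with the identities. -/
inductive GenSubcat (C : LCSC) (B : Set C.Mor) : C.Mor → Prop
  | id (v : C.Mor) : C.IsId v → GenSubcat C B v
  | of (b : C.Mor) : b ∈ B → GenSubcat C B b
  | comp (a b : C.Mor) : GenSubcat C B a → GenSubcat C B b →
      C.src a = C.ran b → GenSubcat C B (C.comp a b)

/-- `B` is a transversal of generators of the maximal proper principal right
ideals of `Λ`: a set of atoms containing exactly one generator of each maximal
proper principal right ideal. -/
def LCSC.IsTransversal (C : LCSC) (B : Set C.Mor) : Prop :=
  (∀ b ∈ B, C.CAtom b) ∧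
  ∀ a : C.Mor, C.MaxIdeal a → ∃! b, b ∈ B ∧ C.Ideal b = C.Ideal a

/-- `Λ` satisfies the R-condition (with respect to `B`): whenever `α = βg` with
`α, β ∈ B*` and `g ∈ Λ⁻¹`, then `g ∈ Λ⁰`. -/
def RCondition (C : LCSC) (B : Set C.Mor) : Prop :=
  ∀ a b g, GenSubcat C B a → GenSubcat C B b → C.IsInvertible g →
    C.src b = C.ran g → a = C.comp b g → C.IsId g


section Helpers

variable {C : LCSC}

lemma isId_ran (a : C.Mor) : C.IsId (C.ran a) := ⟨C.src_ran a, C.ran_ran a⟩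

lemma isId_invertible {v : C.Mor} (h : C.IsId v) : C.IsInvertible v := by
  have hc : C.comp v v = v := by nth_rewrite 2 [← h.1]; exact C.comp_src v
  exact ⟨v, by rw [h.1, h.2], by rw [h.1, h.2], by rw [h.2]; exact hc,
    by rw [h.1]; exact hc⟩

lemma mem_ideal_self (a : C.Mor) : a ∈ C.Ideal a :=
  ⟨C.src a, (C.ran_src a).symm, (C.comp_src a).symm⟩

lemma invertible_comp {a b : C.Mor} (ha : C.IsInvertible a) (hb : C.IsInvertible b)
    (h : C.src a = C.ran b) : C.IsInvertible (C.comp a b) := by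
  obtain ⟨a', ha1, ha2, ha3, ha4⟩ := ha
  obtain ⟨b', hb1, hb2, hb3, hb4⟩ := hb
  have hraa : C.ran a' = C.ran b := ha1 ▸ h
  have hba : C.src b' = C.ran a' := hb2.trans hraa.symm
  refine ⟨C.comp b' a', ?_, ?_, ?_, ?_⟩
  · rw [C.src_comp a b h, C.ran_comp b' a' hba, hb1]
  · rw [C.src_comp b' a' hba, C.ran_comp a b h, ha2]
  · rw [C.ran_comp a b h, C.assoc a b (C.comp b' a') h (hb1.trans (C.ran_comp b' a' hba).symm),
      ← C.assoc b b' a' hb1 hba, hb3, ← hraa, C.id_comp a', ha3]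
  · rw [C.src_comp a b h, C.assoc b' a' (C.comp a b) hba
      (ha2.trans (C.ran_comp a b h).symm),
      ← C.assoc a' a b ha2 h, ha4, h, C.id_comp b, hb4]

lemma mem_ideal_ran {x a : C.Mor} (h : C.ran x = C.ran a) : x ∈ C.Ideal (C.ran a) :=
  ⟨x, by rw [C.src_ran, h], by rw [← h, C.id_comp]⟩

lemma ideal_subset_ran (a : C.Mor) : C.Ideal a ⊆ C.Ideal (C.ran a) := by
  rintro x ⟨c, hc, rfl⟩
  exact mem_ideal_ran (C.ran_comp a c hc)

lemma invertible_of_ran_mem {a : C.Mor} (h : C.ran a ∈ C.Ideal a) :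
    C.IsInvertible a := by
  obtain ⟨c, hc, hrc⟩ := h
  have hsc : C.src c = C.ran a := by
    rw [← C.src_comp a c hc, ← hrc, C.src_ran]
  have hca : C.comp c a = C.src a := by
    apply C.leftCancel a (C.comp c a) (C.src a) (hc.trans (C.ran_comp c a hsc).symm)
      (C.ran_src a).symm
    rw [← C.assoc a c a hc hsc, ← hrc, C.id_comp, C.comp_src]
  exact ⟨c, hc, hsc, hrc.symm, hca⟩

lemma ideal_ran_subset_of_invertible {a : C.Mor} (ha : C.IsInvertible a) :
    C.Ideal (C.ran a) ⊆ C.Ideal a := by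
  obtain ⟨a', ha1, ha2, ha3, ha4⟩ := ha
  rintro x ⟨c, hc, rfl⟩
  rw [C.src_ran] at hc
  have hax : C.src a' = C.ran c := ha2.trans hc
  refine ⟨C.comp a' c, ha1.trans (C.ran_comp a' c hax).symm, ?_⟩
  rw [← C.assoc a a' c (ha1) hax, ha3]

lemma ideal_comp_invertible {b c : C.Mor} (hc : C.IsInvertible c)
    (h : C.src b = C.ran c) : C.Ideal (C.comp b c) = C.Ideal b := by
  obtain ⟨c', hc1, hc2, hc3, hc4⟩ := hc
  apply Set.Subset.antisymm
  · rintro x ⟨e, he, rfl⟩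
    rw [C.src_comp b c h] at he
    refine ⟨C.comp c e, h.trans (C.ran_comp c e he).symm, ?_⟩
    rw [C.assoc b c e h he]
  · rintro x ⟨e, he, rfl⟩
    have hce : C.src c' = C.ran e := hc2.trans (h.symm.trans he)
    refine ⟨C.comp c' e, (C.src_comp b c h).trans (hc1.trans (C.ran_comp c' e hce).symm), ?_⟩
    rw [← C.assoc (C.comp b c) c' e ((C.src_comp b c h).trans hc1) hce,
      C.assoc b c c' h hc1, hc3, ← h, C.comp_src]

lemma atom_maxIdeal {α : C.Mor} (hatom : C.CAtom α) (hninv : ¬ C.IsInvertible α) :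
    C.MaxIdeal α := by
  have hproper : ¬ C.Ideal (C.ran α) ⊆ C.Ideal α := by
    intro hsub
    exact hninv (invertible_of_ran_mem (hsub (mem_ideal_ran (C.ran_ran α))))
  constructor
  · exact ⟨ideal_subset_ran α, hproper⟩
  · intro b hab hbr
    obtain ⟨c, hbc, hαc⟩ := hab (mem_ideal_self α)
    rcases hatom b c hbc hαc with hbinv | hcinv
    · exfalso
      apply hbr.2
      have hrb : C.ran b = C.ran α := by rw [hαc, C.ran_comp b c hbc]
      rw [← hrb]
      exact ideal_ran_subset_of_invertible hbinv
    · rw [hαc, ideal_comp_invertible hcinv hbc]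

lemma rep_of_ideal_eq {α b : C.Mor} (h : C.Ideal b = C.Ideal α) :
    ∃ g, C.IsInvertible g ∧ C.src b = C.ran g ∧ α = C.comp b g := by
  obtain ⟨g, hbg, hαg⟩ : α ∈ C.Ideal b := h ▸ mem_ideal_self α
  obtain ⟨h', hαh, hbh⟩ : b ∈ C.Ideal α := h.symm ▸ mem_ideal_self b
  have hsg : C.src g = C.src α := by rw [hαg, C.src_comp b g hbg]
  have hsh : C.src h' = C.src b := by rw [hbh, C.src_comp α h' hαh]
  have hgh : C.src g = C.ran h' := hsg.trans hαh
  have hhg : C.src h' = C.ran g := hsh.trans hbg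
  have hgh1 : C.comp g h' = C.src b := by
    apply C.leftCancel b (C.comp g h') (C.src b)
      (hbg.trans (C.ran_comp g h' hgh).symm) (C.ran_src b).symm
    rw [← C.assoc b g h' hbg hgh, ← hαg, ← hbh, C.comp_src]
  have hhg1 : C.comp h' g = C.src α := by
    apply C.leftCancel α (C.comp h' g) (C.src α)
      (hαh.trans (C.ran_comp h' g hhg).symm) (C.ran_src α).symm
    rw [← C.assoc α h' g hαh hhg, ← hbh, ← hαg, C.comp_src]
  exact ⟨g, ⟨h', hgh, hhg, hbg ▸ hgh1, hsg ▸ hhg1⟩, hbg, hαg⟩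

end Helpers


lemma exists_rep_list {C : LCSC} {M : Type} [Monoid M]
    (d : C.Mor → M) (hd : C.MLenFn d) (h1 : C.LF1 d) (h2 : C.LF2 d)
    (B : Set C.Mor) (hB : C.IsTransversal B) :
    ∀ l : List M, (∀ e ∈ l, MAtom e) → ∀ α : C.Mor, d α = l.prod →
    ∃ β g, GenSubcat C B β ∧ C.IsInvertible g ∧ C.src β = C.ran g ∧
      α = C.comp β g := by
  intro l
  induction l with
  | nil =>
    intro _ α hα
    rw [List.prod_nil] at hα
    exact ⟨C.ran α, α, .id _ (isId_ran α), (h1 α).mp hα,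
      (C.src_ran α).trans rfl, (C.id_comp α).symm⟩
  | cons e l ih =>
    intro hl α hα
    rw [List.prod_cons] at hα
    by_cases he : e = (1 : M)
    · rw [he, one_mul] at hα
      exact ih (fun x hx => hl x (List.mem_cons_of_mem e hx)) α hα
    · obtain ⟨α₁, α₂, h12, hαc, hd1, hd2⟩ := h2 α e l.prod hα
      have hatom : C.CAtom α₁ := by
        intro b c hbc hbceq
        have hde : e = d b * d c := by rw [← hd1, hbceq, hd b c hbc]
        rcases hl e List.mem_cons_self (d b) (d c) hde with hb1 | hc1
        · exact Or.inl ((h1 b).mp hb1)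
        · exact Or.inr ((h1 c).mp hc1)
      have hninv : ¬ C.IsInvertible α₁ := fun h =>
        he (hd1 ▸ (h1 α₁).mpr h)
      obtain ⟨b, ⟨hbB, hbI⟩, -⟩ := hB.2 α₁ (atom_maxIdeal hatom hninv)
      obtain ⟨g, hginv, hbg, hα₁⟩ := rep_of_ideal_eq hbI
      have hsg : C.src g = C.ran α₂ := by
        rw [← h12, hα₁, C.src_comp b g hbg]
      have hd' : d (C.comp g α₂) = l.prod := by
        rw [hd g α₂ hsg, (h1 g).mpr hginv, one_mul, hd2]
      obtain ⟨β', g', hβ', hg', hsg', heq'⟩ :=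
        ih (fun x hx => hl x (List.mem_cons_of_mem e hx)) (C.comp g α₂) hd'
      have hranβ' : C.ran β' = C.ran g := by
        have h3 : C.ran (C.comp g α₂) = C.ran g := C.ran_comp g α₂ hsg
        rw [heq', C.ran_comp β' g' hsg'] at h3
        exact h3
      have hbβ' : C.src b = C.ran β' := hbg.trans hranβ'.symm
      refine ⟨C.comp b β', g', .comp _ _ (.of b hbB) hβ' hbβ', hg', ?_, ?_⟩
      · rw [C.src_comp b β' hbβ']; exact hsg'
      · rw [hαc, hα₁, C.assoc b g α₂ hbg hsg, heq', ← C.assoc b β' g' hbβ' hsg']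

/-- Under (LF1), (LF2) into a conical atomic monoid, a
transversal `B` of generators of maximal proper principal right ideals, and
the R-condition, every morphism of `Λ` has a unique representation as an
element of `B*Λ⁻¹`. -/
theorem lcsc_unique_representation (C : LCSC) {M : Type} [Monoid M]
    (hM : Conical M) (hMa : AtomicMonoid M) (d : C.Mor → M)
    (hd : C.MLenFn d) (h1 : C.LF1 d) (h2 : C.LF2 d)
    (B : Set C.Mor) (hB : C.IsTransversal B) (hR : RCondition C B) :
    (∀ a : C.Mor, ∃ β g, GenSubcat C B β ∧ C.IsInvertible g ∧
      C.src β = C.ran g ∧ a = C.comp β g) ∧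
    (∀ β₁ β₂ g₁ g₂, GenSubcat C B β₁ → GenSubcat C B β₂ →
      C.IsInvertible g₁ → C.IsInvertible g₂ →
      C.src β₁ = C.ran g₁ → C.src β₂ = C.ran g₂ →
      C.comp β₁ g₁ = C.comp β₂ g₂ → β₁ = β₂ ∧ g₁ = g₂) := by
  constructor
  · intro a
    obtain ⟨l, hl, hlp⟩ := Submonoid.exists_list_of_mem_closure (hMa (d a))
    exact exists_rep_list d hd h1 h2 B hB l hl a hlp.symm
  · intro β₁ β₂ g₁ g₂ hβ₁ hβ₂ hg₁ hg₂ hs₁ hs₂ heq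
    obtain ⟨h, hh1, hh2, hh3, hh4⟩ := hg₂
    have hsg12 : C.src g₁ = C.src g₂ := by
      rw [← C.src_comp β₁ g₁ hs₁, heq, C.src_comp β₂ g₂ hs₂]
    have hg1h : C.src g₁ = C.ran h := hsg12.trans hh1
    have hβ₂eq : β₂ = C.comp β₁ (C.comp g₁ h) := by
      have e1 : C.comp (C.comp β₂ g₂) h = β₂ := by
        rw [C.assoc β₂ g₂ h hs₂ hh1, hh3, ← hs₂, C.comp_src]
      rw [← e1, ← heq, C.assoc β₁ g₁ h hs₁ hg1h]
    have hhinv : C.IsInvertible h :=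
      ⟨g₂, hh2, hh1, hh1 ▸ hh4, hh2 ▸ hh3⟩
    have hging : C.IsInvertible (C.comp g₁ h) := invertible_comp hg₁ hhinv hg1h
    have hrg : C.src β₁ = C.ran (C.comp g₁ h) := by
      rw [C.ran_comp g₁ h hg1h]; exact hs₁
    have hid : C.IsId (C.comp g₁ h) := hR β₂ β₁ _ hβ₂ hβ₁ hging hrg hβ₂eq
    have hββ : β₂ = β₁ := by
      rw [hβ₂eq, ← (hrg.trans hid.2), C.comp_src]
    refine ⟨hββ.symm, ?_⟩
    apply C.leftCancel β₁ g₁ g₂ hs₁ (hββ ▸ hs₂)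
    rw [heq, hββ]
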